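/- Let q ≥ 2 and let T be a subgroup of S_q, with C(T) = {α(t) : t ∈ T} the permutation code generated by T in H(q,q). Then C(T) is diagonally neighbour transitive in H(q,q) if and only if the normaliser N_{S_q}(T) acts 2-transitively on {1,…,q}. Moreover, for every positive integer p, if C(T) is diagonally neighbour transitive then the p-fold repetition code Rep_p(C(T)) is a diagonally neighbour transitive frequency permutation array in H(pq,q). -/

import Mathlib

open Equiv Pointwise

section HammingDefs

variable {I : Type*} [Fintype I] [DecidableEq I] {q : ℕ}

/-- The permutation of the vertex set of the Hamming graph `H(I,q)` induced by the
letter permutations `g i` (acting coordinatewise) followed by the coordinate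
permutation `σ`:  `(α^x)_i = g_{σ⁻¹ i} (α_{σ⁻¹ i})`. -/
def tvp (g : I → Equiv.Perm (Fin q)) (σ : Equiv.Perm I) : Equiv.Perm (I → Fin q) where
  toFun α i := g (σ⁻¹ i) (α (σ⁻¹ i))
  invFun β i := (g i)⁻¹ (β (σ i))
  left_inv α := by funext i; simp
  right_inv β := by funext i; simp

/-- The automorphism group of the Hamming graph `H(I,q)`: all permutations of the
vertex set preserving adjacency (Hamming distance 1). -/
def autH (I : Type*) [Fintype I] [DecidableEq I] (q : ℕ) :
    Subgroup (Equiv.Perm (I → Fin q)) where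
  carrier := {y | ∀ α β : I → Fin q, hammingDist (y α) (y β) = 1 ↔ hammingDist α β = 1}
  one_mem' := by intro α β; simp
  mul_mem' := by
    intro a b ha hb α β
    rw [Equiv.Perm.mul_apply, Equiv.Perm.mul_apply, ha, hb]
  inv_mem' := by
    intro a ha α β
    simpa using (ha (a⁻¹ α) (a⁻¹ β)).symm

/-- The homomorphism `S_q × S_I → Sym(V(H(I,q)))` whose image is `Diag(S_q) ⋊ L`. -/
def diagLHom (I : Type*) [Fintype I] [DecidableEq I] (q : ℕ) :
    Equiv.Perm (Fin q) × Equiv.Perm I →* Equiv.Perm (I → Fin q) where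
  toFun x := tvp (fun _ => x.1) x.2
  map_one' := by
    ext α i
    simp [tvp]
  map_mul' x y := by
    ext α i
    simp [tvp, mul_inv_rev]

/-- The subgroup `Diag_I(S_q) ⋊ L` of the automorphism group of `H(I,q)`. -/
def diagL (I : Type*) [Fintype I] [DecidableEq I] (q : ℕ) :
    Subgroup (Equiv.Perm (I → Fin q)) :=
  (diagLHom I q).range

/-- The subgroup `L` of pure coordinate permutations of `H(I,q)`. -/
def permL (I : Type*) [Fintype I] [DecidableEq I] (q : ℕ) :
    Subgroup (Equiv.Perm (I → Fin q)) :=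
  ((diagLHom I q).comp (MonoidHom.inr (Equiv.Perm (Fin q)) (Equiv.Perm I))).range

/-- Distance from a vertex to a code. -/
noncomputable def distC (γ : I → Fin q) (C : Set (I → Fin q)) : ℕ :=
  sInf {d | ∃ β ∈ C, hammingDist γ β = d}

/-- The cell `C_i` of the distance partition of the code `C`. -/
def cell (C : Set (I → Fin q)) (i : ℕ) : Set (I → Fin q) :=
  {γ | distC γ C = i}

/-- The covering radius of the code `C`. -/
noncomputable def covRad (C : Set (I → Fin q)) : ℕ :=
  sSup {d | ∃ γ : I → Fin q, distC γ C = d}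

/-- The minimum distance of the code `C`. -/
noncomputable def minDist (C : Set (I → Fin q)) : ℕ :=
  sInf {d | ∃ β ∈ C, ∃ γ ∈ C, β ≠ γ ∧ hammingDist β γ = d}

/-- `S` is an orbit of the subgroup `X` of permutations of the vertex set. -/
def IsOrbitOf (X : Subgroup (Equiv.Perm (I → Fin q))) (S : Set (I → Fin q)) : Prop :=
  ∃ v, S = {w | ∃ x ∈ X, x v = w}

/-- `C` is `X`-neighbour transitive: `X` is a group of automorphisms of the Hamming
graph, and both `C` and its set of neighbours `C_1` are `X`-orbits. -/
def NbrTransitive (X : Subgroup (Equiv.Perm (I → Fin q))) (C : Set (I → Fin q)) : Prop :=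
  X ≤ autH I q ∧ IsOrbitOf X C ∧ IsOrbitOf X (cell C 1)

/-- `C` is `X`-completely transitive: every cell of the distance partition is an `X`-orbit. -/
def ComplTransitive (X : Subgroup (Equiv.Perm (I → Fin q))) (C : Set (I → Fin q)) : Prop :=
  X ≤ autH I q ∧ ∀ i ≤ covRad C, IsOrbitOf X (cell C i)

/-- `C` is diagonally `X`-neighbour transitive. -/
def DiagNbrTransitive (X : Subgroup (Equiv.Perm (I → Fin q))) (C : Set (I → Fin q)) : Prop :=
  NbrTransitive X C ∧ X ≤ diagL I q

/-- The automorphism group of the code `C`: the setwise stabiliser of `C` in the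
automorphism group of the Hamming graph. -/
def autCode (C : Set (I → Fin q)) : Subgroup (Equiv.Perm (I → Fin q)) :=
  autH I q ⊓ MulAction.stabilizer (Equiv.Perm (I → Fin q)) C

/-- Number of occurrences of the letter `a` in the vertex `α`. -/
def cnt (α : I → Fin q) (a : Fin q) : ℕ :=
  (Finset.univ.filter fun i => α i = a).card

/-- The composition `Q(α)` of a vertex: the set of pairs `(a, p)` such that the letter `a`
occurs exactly `p > 0` times in `α`. -/
def compOf (α : I → Fin q) : Set (Fin q × ℕ) :=
  {x | 0 < x.2 ∧ cnt α x.1 = x.2}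

/-- `Num(α)`: the set of pairs `(p, s)` such that exactly `s > 0` distinct letters occur
exactly `p > 0` times in `α`. -/
def numOf (α : I → Fin q) : Set (ℕ × ℕ) :=
  {x | 0 < x.1 ∧ 0 < x.2 ∧ (Finset.univ.filter fun a => cnt α a = x.1).card = x.2}

/-- The repetition code `Rep(I,q)`. -/
def repCode (I : Type*) [Fintype I] [DecidableEq I] (q : ℕ) : Set (I → Fin q) :=
  {α | ∃ a, α = fun _ => a}

/-- The injection code `Inj(I,q)`: all tuples with pairwise distinct entries. -/
def injCode (I : Type*) [Fintype I] [DecidableEq I] (q : ℕ) : Set (I → Fin q) :=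
  {α | Function.Injective α}

/-- The code `All(pq,q)`: all vertices in which every letter occurs exactly `p` times. -/
def allCode (I : Type*) [Fintype I] [DecidableEq I] (q p : ℕ) : Set (I → Fin q) :=
  {α | ∀ a, cnt α a = p}

/-- `C` is `s`-regular. -/
def RegularUpTo (C : Set (I → Fin q)) (s : ℕ) : Prop :=
  ∀ i ≤ s, ∀ γ ∈ cell C i, ∀ γ' ∈ cell C i, ∀ k : ℕ,
    {β ∈ C | hammingDist γ β = k}.ncard = {β ∈ C | hammingDist γ' β = k}.ncard

/-- `C` is completely regular. -/
def ComplRegular (C : Set (I → Fin q)) : Prop :=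
  RegularUpTo C (covRad C)

/-- `C` is a constant composition code: every letter occurs the same positive number of
times in every codeword. -/
def IsCCC (C : Set (I → Fin q)) : Prop :=
  C.Nonempty ∧ ∃ f : Fin q → ℕ, (∀ a, 0 < f a) ∧ ∀ β ∈ C, ∀ a, cnt β a = f a

end HammingDefs

section Weight

/-- The weight of a binary vertex: number of nonzero entries. -/
def wt {m : ℕ} (α : Fin m → Fin 2) : ℕ :=
  (Finset.univ.filter fun i => α i ≠ 0).card

/-- The code `W([m/2],2)`: binary `m`-tuples of weight `(m+1)/2` or `(m-1)/2`. -/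
def wCode (m : ℕ) : Set (Fin m → Fin 2) :=
  {α | wt α = (m+1)/2 ∨ wt α = (m-1)/2}

/-- The code `W([m/2],2)` over a general alphabet (used when `q = 2`): vertices in which
one letter occurs `(m+1)/2` times and another `(m-1)/2` times. -/
def wCodeGen (m q : ℕ) : Set (Fin m → Fin q) :=
  {α | ∃ a b : Fin q, a ≠ b ∧ cnt α a = (m+1)/2 ∧ cnt α b = (m-1)/2}

end Weight

section PermCodes

/-- The vertex `α(g) = (1^g, …, q^g)` of `H(q,q)` associated with a permutation `g`. -/
def alphaVtx {q : ℕ} (g : Equiv.Perm (Fin q)) : Fin q → Fin q := fun i => g i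

/-- The permutation code generated by a set `T` of permutations. -/
def permCode {q : ℕ} (T : Set (Equiv.Perm (Fin q))) : Set (Fin q → Fin q) :=
  alphaVtx '' T

end PermCodes

section Repetition

variable {I : Type*} [Fintype I] [DecidableEq I] {q : ℕ}

/-- The `p`-fold repetition `rep_p(α) = (α,…,α)`, a vertex of `H(p·|I|, q)`. -/
def repv (p : ℕ) (α : I → Fin q) : Fin p × I → Fin q := fun ji => α ji.2

/-- The `p`-fold repetition code `Rep_p(C)`. -/
def repCodeP (p : ℕ) (C : Set (I → Fin q)) : Set (Fin p × I → Fin q) :=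
  repv p '' C

/-- The homomorphism `Sym(V(H(I,q))) × S_p → Sym(V(H(p·|I|,q)))`: the pair `(x,σ)` acts on
`p`-tuples of vertices by `(α_1,…,α_p) ↦ (α_{σ⁻¹(1)}^x, …, α_{σ⁻¹(p)}^x)`. -/
def repHom (p : ℕ) (I : Type*) [Fintype I] [DecidableEq I] (q : ℕ) :
    Equiv.Perm (I → Fin q) × Equiv.Perm (Fin p) →* Equiv.Perm (Fin p × I → Fin q) where
  toFun x :=
    { toFun := fun β ji => x.1 (fun i => β (x.2⁻¹ ji.1, i)) ji.2
      invFun := fun β ji => x.1⁻¹ (fun i => β (x.2 ji.1, i)) ji.2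
      left_inv := by intro β; funext ji; simp
      right_inv := by intro β; funext ji; simp }
  map_one' := by ext β ji; simp
  map_mul' x y := by ext β ji; simp [mul_inv_rev]

end Repetition
set_option linter.unusedSectionVars false
section Aux

variable {I : Type*} [Fintype I] [DecidableEq I] {q : ℕ}

lemma diagLHom_apply' (x : Equiv.Perm (Fin q) × Equiv.Perm I) (α : I → Fin q) (i : I) :
    diagLHom I q x α i = x.1 (α (x.2⁻¹ i)) := rfl

lemma hammingDist_tvp (g : I → Equiv.Perm (Fin q)) (σ : Equiv.Perm I) (α β : I → Fin q) :
    hammingDist (tvp g σ α) (tvp g σ β) = hammingDist α β := by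
  simp only [hammingDist]
  apply Finset.card_bij' (fun i _ => σ⁻¹ i) (fun i _ => σ i)
  · intro a ha
    simp only [Finset.mem_filter, Finset.mem_univ, true_and] at ha ⊢
    simpa [tvp] using ha
  · intro a ha
    simp only [Finset.mem_filter, Finset.mem_univ, true_and] at ha ⊢
    simpa [tvp] using ha
  · intro a _; simp
  · intro a _; simp

lemma diagL_le_autH : diagL I q ≤ autH I q := by
  rintro x ⟨⟨h, σ⟩, rfl⟩ α β
  have he : (diagLHom I q) (h, σ) = tvp (fun _ => h) σ := rfl
  rw [he, hammingDist_tvp]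

lemma dist_one_of_single {α β : I → Fin q} (i₀ : I) (hne : α i₀ ≠ β i₀)
    (heq : ∀ k, k ≠ i₀ → α k = β k) : hammingDist α β = 1 := by
  have hf : (Finset.univ.filter fun i => α i ≠ β i) = {i₀} := by
    ext k
    simp only [Finset.mem_filter, Finset.mem_univ, true_and, Finset.mem_singleton]
    constructor
    · intro h; by_contra hk; exact h (heq k hk)
    · rintro rfl; exact hne
  show (Finset.univ.filter fun i => α i ≠ β i).card = 1
  rw [hf]; rfl

lemma single_of_dist_one {α β : I → Fin q} (h : hammingDist α β = 1) :
    ∃ i₀, α i₀ ≠ β i₀ ∧ ∀ k, k ≠ i₀ → α k = β k := by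
  have h' : (Finset.univ.filter fun i => α i ≠ β i).card = 1 := h
  obtain ⟨i₀, hi⟩ := Finset.card_eq_one.mp h'
  refine ⟨i₀, ?_, ?_⟩
  · have : i₀ ∈ Finset.univ.filter fun i => α i ≠ β i := hi ▸ Finset.mem_singleton_self i₀
    simpa using this
  · intro k hk
    by_contra hne
    have : k ∈ Finset.univ.filter fun i => α i ≠ β i := by simpa using hne
    rw [hi, Finset.mem_singleton] at this
    exact hk this

lemma mem_cell_one {C : Set (I → Fin q)}
    (hmin : ∀ β ∈ C, ∀ β' ∈ C, β ≠ β' → 2 ≤ hammingDist β β') (γ : I → Fin q) :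
    γ ∈ cell C 1 ↔ ∃ β ∈ C, hammingDist γ β = 1 := by
  constructor
  · intro hγ
    have hγ' : sInf {d | ∃ β ∈ C, hammingDist γ β = d} = 1 := hγ
    have hne : {d | ∃ β ∈ C, hammingDist γ β = d}.Nonempty := by
      by_contra hemp
      rw [Set.not_nonempty_iff_eq_empty] at hemp
      rw [hemp, Nat.sInf_empty] at hγ'
      omega
    have := Nat.sInf_mem hne
    rw [hγ'] at this
    exact this
  · rintro ⟨β, hβ, h1⟩
    have h1mem : (1 : ℕ) ∈ {d | ∃ β ∈ C, hammingDist γ β = d} := ⟨β, hβ, h1⟩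
    have h0 : ∀ d ∈ {d | ∃ β ∈ C, hammingDist γ β = d}, d ≠ 0 := by
      rintro d ⟨β', hβ', hd⟩ rfl
      have hγC : γ ∈ C := by rwa [← eq_of_hammingDist_eq_zero hd] at hβ'
      have hne : γ ≠ β := by intro e; rw [e, hammingDist_self] at h1; omega
      have := hmin γ hγC β hβ hne
      omega
    have hle := Nat.sInf_le h1mem
    have hmem := Nat.sInf_mem ⟨1, h1mem⟩
    have := h0 _ hmem
    show sInf {d | ∃ β ∈ C, hammingDist γ β = d} = 1
    omega

end Aux
section Aux2

variable {q : ℕ}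

lemma alphaVtx_injective : Function.Injective (alphaVtx (q := q)) := fun g g' h =>
  Equiv.ext fun i => congrFun h i

lemma diagLHom_alphaVtx (h σ t : Equiv.Perm (Fin q)) :
    diagLHom (Fin q) q (h, σ) (alphaVtx t) = alphaVtx (h * t * σ⁻¹) := rfl

lemma alphaVtx_ne_of_repeat {t : Equiv.Perm (Fin q)} {γ : Fin q → Fin q} {k k' : Fin q}
    (hkk' : k ≠ k') (hval : γ k = γ k') : γ ≠ alphaVtx t := by
  intro e
  subst e
  exact hkk' (t.injective hval)

lemma permCode_minsep {t t' : Equiv.Perm (Fin q)} (h : t ≠ t') :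
    2 ≤ hammingDist (alphaVtx t) (alphaVtx t') := by
  have h0 : hammingDist (alphaVtx t) (alphaVtx t') ≠ 0 := by
    rw [hammingDist_ne_zero]
    exact fun e => h (alphaVtx_injective e)
  have h1 : hammingDist (alphaVtx t) (alphaVtx t') ≠ 1 := by
    intro e
    obtain ⟨i₀, hne, hoff⟩ := single_of_dist_one e
    apply hne
    -- t i₀ = t' i₀ since the missing value is the same
    have hk : t'⁻¹ (t i₀) = i₀ := by
      by_contra hk
      have := hoff _ hk
      simp only [alphaVtx] at this
      have : t'⁻¹ (t i₀) = i₀ := t.injective (by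
        rw [this]
        simp)
      exact hk this
    show alphaVtx t i₀ = alphaVtx t' i₀
    simp only [alphaVtx]
    conv_rhs => rw [← hk]
    simp
  omega

lemma mem_normalizer_of_conj {G : Type*} [Group G] [Finite G] {T : Subgroup G} {g : G}
    (h : ∀ t ∈ T, g * t * g⁻¹ ∈ T) : g ∈ Subgroup.normalizer (T : Set G) := by
  have hs : g ∈ Subgroup.setNormalizer (T : Set G) :=
    Subgroup.mem_normalizer_fintype fun n hn => h n hn
  exact hs

/-- The group `{(h,σ) : h ∈ N(T), hσ⁻¹ ∈ T}`. -/
def Kgrp (q : ℕ) (T : Subgroup (Equiv.Perm (Fin q))) :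
    Subgroup (Equiv.Perm (Fin q) × Equiv.Perm (Fin q)) where
  carrier := {x | x.1 ∈ Subgroup.normalizer (T : Set (Equiv.Perm (Fin q))) ∧ x.1 * x.2⁻¹ ∈ T}
  one_mem' := ⟨Subgroup.one_mem _, by simpa using T.one_mem⟩
  mul_mem' := by
    rintro a b ⟨ha1, ha2⟩ ⟨hb1, hb2⟩
    refine ⟨mul_mem ha1 hb1, ?_⟩
    have h1 : a.1 * (b.1 * b.2⁻¹) * a.1⁻¹ ∈ T :=
      (Subgroup.mem_normalizer_iff.mp ha1 _).mp hb2
    have h2 := mul_mem h1 ha2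
    have heq : a.1 * (b.1 * b.2⁻¹) * a.1⁻¹ * (a.1 * a.2⁻¹) = a.1 * b.1 * (a.2 * b.2)⁻¹ := by
      group
    rw [heq] at h2
    exact h2
  inv_mem' := by
    rintro a ⟨ha1, ha2⟩
    refine ⟨inv_mem ha1, ?_⟩
    have h1 : a.1⁻¹ * (a.1 * a.2⁻¹)⁻¹ * (a.1⁻¹)⁻¹ ∈ T :=
      (Subgroup.mem_normalizer_iff.mp (inv_mem ha1) _).mp (inv_mem ha2)
    have heq : a.1⁻¹ * (a.1 * a.2⁻¹)⁻¹ * (a.1⁻¹)⁻¹ = a.1⁻¹ * (a.2⁻¹)⁻¹ := by group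
    rw [heq] at h1
    exact h1

lemma mem_Kgrp {T : Subgroup (Equiv.Perm (Fin q))} {x : Equiv.Perm (Fin q) × Equiv.Perm (Fin q)} :
    x ∈ Kgrp q T ↔ x.1 ∈ Subgroup.normalizer (T : Set (Equiv.Perm (Fin q))) ∧ x.1 * x.2⁻¹ ∈ T := Iff.rfl

end Aux2
section Aux3

variable {q p : ℕ}

lemma hammingDist_repv {I : Type*} [Fintype I] [DecidableEq I] (p : ℕ) (x y : I → Fin q) :
    hammingDist (repv p x) (repv p y) = p * hammingDist x y := by
  have hf : (Finset.univ.filter fun ji : Fin p × I => repv p x ji ≠ repv p y ji)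
      = Finset.univ ×ˢ (Finset.univ.filter fun i => x i ≠ y i) := by
    ext ⟨j, i⟩
    simp only [Finset.mem_filter, Finset.mem_univ, true_and, Finset.mem_product]; rfl
  show (Finset.univ.filter fun ji : Fin p × I => repv p x ji ≠ repv p y ji).card = _
  rw [hf, Finset.card_product]
  simp [hammingDist]

/-- The homomorphism used to build the group acting on the repetition code. -/
def psiHom (p q : ℕ) :
    (Equiv.Perm (Fin q) × Equiv.Perm (Fin q)) × Equiv.Perm (Fin p) →*
      Equiv.Perm (Fin p × Fin q → Fin q) where
  toFun x := diagLHom (Fin p × Fin q) q (x.1.1, Equiv.prodCongr x.2 x.1.2)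
  map_one' := by
    have h1 : (Equiv.prodCongr (1 : Equiv.Perm (Fin p)) (1 : Equiv.Perm (Fin q)))
        = (1 : Equiv.Perm (Fin p × Fin q)) := Equiv.ext fun ⟨j, i⟩ => rfl
    show diagLHom (Fin p × Fin q) q (1, _) = 1
    simp only [Prod.snd_one, Prod.fst_one]
    rw [h1]
    exact map_one (diagLHom (Fin p × Fin q) q)
  map_mul' x y := by
    have h1 : Equiv.prodCongr (x.2 * y.2) (x.1.2 * y.1.2)
        = Equiv.prodCongr x.2 x.1.2 * Equiv.prodCongr y.2 y.1.2 := Equiv.ext fun ⟨j, i⟩ => rfl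
    show diagLHom (Fin p × Fin q) q ((x.1.1 * y.1.1), _) = _
    simp only [Prod.snd_mul, Prod.fst_mul]
    rw [h1]
    exact map_mul (diagLHom (Fin p × Fin q) q) (x.1.1, Equiv.prodCongr x.2 x.1.2)
      (y.1.1, Equiv.prodCongr y.2 y.1.2)

lemma psiHom_apply (x : (Equiv.Perm (Fin q) × Equiv.Perm (Fin q)) × Equiv.Perm (Fin p))
    (β : Fin p × Fin q → Fin q) (j : Fin p) (i : Fin q) :
    psiHom p q x β (j, i) = x.1.1 (β (x.2⁻¹ j, x.1.2⁻¹ i)) := rfl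

lemma psiHom_repv (h σ : Equiv.Perm (Fin q)) (τ : Equiv.Perm (Fin p)) (t : Equiv.Perm (Fin q)) :
    psiHom p q ((h, σ), τ) (repv p (alphaVtx t)) = repv p (alphaVtx (h * t * σ⁻¹)) := rfl

lemma repv_injective (hp : 0 < p) {I : Type*} [Fintype I] [DecidableEq I] :
    Function.Injective (repv (I := I) (q := q) p) := by
  intro x y h
  funext i
  exact congrFun h (⟨0, hp⟩, i)

end Aux3
section Main

variable {q : ℕ}

lemma mem_permCode_iff {T : Subgroup (Equiv.Perm (Fin q))} {β : Fin q → Fin q} :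
    β ∈ permCode (T : Set (Equiv.Perm (Fin q))) ↔ ∃ t ∈ T, alphaVtx t = β := Iff.rfl

lemma permCode_hmin (T : Subgroup (Equiv.Perm (Fin q))) :
    ∀ β ∈ permCode (T : Set (Equiv.Perm (Fin q))),
      ∀ β' ∈ permCode (T : Set (Equiv.Perm (Fin q))), β ≠ β' → 2 ≤ hammingDist β β' := by
  rintro β ⟨t, _, rfl⟩ β' ⟨t', _, rfl⟩ hne
  exact permCode_minsep fun e => hne (by rw [e])

lemma fwd_direction (q : ℕ) (hq : 2 ≤ q) (T : Subgroup (Equiv.Perm (Fin q)))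
    (hX : ∃ X : Subgroup (Equiv.Perm (Fin q → Fin q)),
        DiagNbrTransitive X (permCode (T : Set (Equiv.Perm (Fin q))))) :
    ∀ i₁ i₂ j₁ j₂ : Fin q, i₁ ≠ i₂ → j₁ ≠ j₂ →
      ∃ y ∈ Subgroup.normalizer (T : Set (Equiv.Perm (Fin q))), y i₁ = j₁ ∧ y i₂ = j₂ := by
  obtain ⟨X, ⟨⟨hXaut, hCorb, hC1orb⟩, hXdiag⟩⟩ := hX
  intro i₁ i₂ j₁ j₂ h12 hj12
  set C := permCode (T : Set (Equiv.Perm (Fin q))) with hCdef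
  have hmin := permCode_hmin T
  set ν : Fin q → Fin q := fun k => if k = i₂ then i₁ else k with hν
  set ν' : Fin q → Fin q := fun k => if k = j₂ then j₁ else k with hν'
  have hα1 : alphaVtx (1 : Equiv.Perm (Fin q)) ∈ C := ⟨1, T.one_mem, rfl⟩
  have hνmem : ν ∈ cell C 1 := by
    rw [mem_cell_one hmin]
    refine ⟨alphaVtx 1, hα1, dist_one_of_single i₂ ?_ ?_⟩
    · simp [hν, alphaVtx, h12]
    · intro k hk; simp [hν, alphaVtx, hk]
  have hν'mem : ν' ∈ cell C 1 := by
    rw [mem_cell_one hmin]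
    refine ⟨alphaVtx 1, hα1, dist_one_of_single j₂ ?_ ?_⟩
    · simp [hν', alphaVtx, hj12]
    · intro k hk; simp [hν', alphaVtx, hk]
  obtain ⟨v, hv⟩ := hC1orb
  rw [hv] at hνmem hν'mem
  obtain ⟨x₁, hx₁, e₁⟩ := hνmem
  obtain ⟨x₂, hx₂, e₂⟩ := hν'mem
  have hxX : x₂ * x₁⁻¹ ∈ X := mul_mem hx₂ (inv_mem hx₁)
  have hxν : (x₂ * x₁⁻¹) ν = ν' := by
    rw [← e₁, ← e₂]
    simp
  obtain ⟨⟨h, σ⟩, hx⟩ := hXdiag hxX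
  -- the group preserves C
  have hCpres : ∀ t ∈ T, h * t * σ⁻¹ ∈ T := by
    intro t ht
    have hαt : alphaVtx t ∈ C := ⟨t, ht, rfl⟩
    obtain ⟨v₀, hv₀⟩ := hCorb
    rw [hv₀] at hαt
    obtain ⟨x₀, hx₀, e₀⟩ := hαt
    have : (x₂ * x₁⁻¹) (alphaVtx t) ∈ C := by
      rw [hv₀]
      exact ⟨(x₂ * x₁⁻¹) * x₀, mul_mem hxX hx₀, by rw [← e₀]; simp⟩
    rw [← hx, diagLHom_alphaVtx] at this
    obtain ⟨t', ht', e'⟩ := this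
    rwa [← alphaVtx_injective e']
  have hs : h * σ⁻¹ ∈ T := by simpa using hCpres 1 T.one_mem
  have hnorm : h ∈ Subgroup.normalizer (T : Set (Equiv.Perm (Fin q))) := by
    apply mem_normalizer_of_conj
    intro t ht
    have h2 := mul_mem (hCpres t ht) (inv_mem hs)
    have heq : h * t * σ⁻¹ * (h * σ⁻¹)⁻¹ = h * t * h⁻¹ := by group
    rwa [heq] at h2
  -- functional equation
  have heval : ∀ k, h (ν k) = ν' (σ k) := by
    intro k
    have := congrFun hxν (σ k)
    rw [← hx] at this
    have h2 : h (ν (σ⁻¹ (σ k))) = ν' (σ k) := this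
    simpa using h2
  -- h i₁ = j₁
  have htwo : ∀ k k', k ≠ k' → ν' k = ν' k' → ν' k = j₁ := by
    intro k k' hkk' he
    by_cases hk : k = j₂
    · simp [hν', hk]
    · by_cases hk' : k' = j₂
      · rw [he]; simp [hν', hk']
      · exfalso; apply hkk'; simpa [hν', hk, hk'] using he
  have e1 : h i₁ = ν' (σ i₁) := by
    have := heval i₁
    rwa [show ν i₁ = i₁ by simp [hν, h12]] at this
  have e2 : h i₁ = ν' (σ i₂) := by
    have := heval i₂
    rwa [show ν i₂ = i₁ by simp [hν]] at this
  have hσne : σ i₁ ≠ σ i₂ := fun e => h12 (σ.injective e)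
  have hA : h i₁ = j₁ := by
    rw [e1]
    exact htwo _ _ hσne (by rw [← e1, e2])
  have hB : h i₂ = j₂ := by
    by_contra hB
    have hν'val : ν' (h i₂) = h i₂ := by simp [hν', hB]
    have h2 := heval (σ⁻¹ (h i₂))
    rw [show σ (σ⁻¹ (h i₂)) = h i₂ from σ.apply_symm_apply _, hν'val] at h2
    have h3 : ν (σ⁻¹ (h i₂)) = i₂ := h.injective h2
    by_cases hc : σ⁻¹ (h i₂) = i₂
    · rw [hc] at h3
      simp only [hν, if_pos rfl] at h3
      exact h12 h3
    · simp only [hν, if_neg hc] at h3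
      exact hc h3
  exact ⟨h, hnorm, hA, hB⟩

end Main
section Main2

lemma bwd_direction (q : ℕ) (hq : 2 ≤ q) (T : Subgroup (Equiv.Perm (Fin q)))
    (h2t : ∀ i₁ i₂ j₁ j₂ : Fin q, i₁ ≠ i₂ → j₁ ≠ j₂ →
      ∃ y ∈ Subgroup.normalizer (T : Set (Equiv.Perm (Fin q))), y i₁ = j₁ ∧ y i₂ = j₂) :
    ∃ X : Subgroup (Equiv.Perm (Fin q → Fin q)),
      DiagNbrTransitive X (permCode (T : Set (Equiv.Perm (Fin q)))) := by
  set C := permCode (T : Set (Equiv.Perm (Fin q))) with hCdef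
  have hmin := permCode_hmin T
  set X : Subgroup (Equiv.Perm (Fin q → Fin q)) :=
    Subgroup.map (diagLHom (Fin q) q) (Kgrp q T) with hXdef
  have hle : X ≤ diagL (Fin q) q := by
    rintro x ⟨k, hk, rfl⟩
    exact ⟨k, rfl⟩
  set a0 : Fin q := ⟨0, by omega⟩ with ha0
  set a1 : Fin q := ⟨1, by omega⟩ with ha1
  have ha01 : a0 ≠ a1 := by simp [ha0, ha1, Fin.ext_iff]
  set ν₀ : Fin q → Fin q := fun k => if k = a1 then a0 else k with hν₀
  refine ⟨X, ⟨⟨fun x hx => diagL_le_autH (hle hx), ⟨alphaVtx 1, ?_⟩, ⟨ν₀, ?_⟩⟩, hle⟩⟩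
  · -- C is the orbit of alphaVtx 1
    ext w
    simp only [Set.mem_setOf_eq]
    constructor
    · rintro ⟨t, ht, rfl⟩
      refine ⟨diagLHom (Fin q) q (1, t⁻¹), ⟨(1, t⁻¹), ⟨Subgroup.one_mem _, by simpa using ht⟩, rfl⟩, ?_⟩
      rw [diagLHom_alphaVtx]
      simp
    · rintro ⟨x, ⟨⟨h, σ⟩, hk, rfl⟩, rfl⟩
      rw [diagLHom_alphaVtx]
      exact ⟨h * 1 * σ⁻¹, by simpa using hk.2, rfl⟩
  · -- cell C 1 is the orbit of ν₀
    ext γ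
    rw [mem_cell_one hmin]
    simp only [Set.mem_setOf_eq]
    constructor
    · rintro ⟨β, ⟨t, ht, rfl⟩, hdist⟩
      obtain ⟨i, hne, hoff⟩ := single_of_dist_one hdist
      have hne' : γ i ≠ t i := hne
      have hii' : t⁻¹ (γ i) ≠ i := by
        intro e
        exact hne' (by simpa using congrArg t e)
      obtain ⟨y, hy, hy0, hy1⟩ := h2t a0 a1 (t⁻¹ (γ i)) i ha01 hii'
      refine ⟨diagLHom (Fin q) q (t * y, y),
        ⟨(t * y, y), ⟨mul_mem (T.le_normalizer ht) hy, by simpa [mul_assoc] using ht⟩, rfl⟩, ?_⟩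
      funext k
      rw [diagLHom_apply']
      show (t * y) (ν₀ (y⁻¹ k)) = γ k
      by_cases hk : k = i
      · subst hk
        have : y⁻¹ k = a1 := by rw [← hy1]; simp
        rw [this]
        simp only [hν₀, if_pos rfl, Equiv.Perm.mul_apply, hy0]
        simp
      · have hky : y⁻¹ k ≠ a1 := by
          intro e
          apply hk
          rw [← hy1, ← e]
          simp
        rw [show ν₀ (y⁻¹ k) = y⁻¹ k from if_neg hky]
        simp only [Equiv.Perm.mul_apply, Equiv.Perm.inv_def, Equiv.apply_symm_apply]
        exact (hoff k hk).symm
    · rintro ⟨x, ⟨⟨h, σ⟩, hk, rfl⟩, rfl⟩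
      refine ⟨alphaVtx (h * σ⁻¹), ⟨h * σ⁻¹, hk.2, rfl⟩, dist_one_of_single (σ a1) ?_ ?_⟩
      · rw [diagLHom_apply']
        show h (ν₀ (σ⁻¹ (σ a1))) ≠ (h * σ⁻¹) (σ a1)
        simp only [Equiv.Perm.inv_def, Equiv.symm_apply_apply, Equiv.Perm.mul_apply, hν₀, if_pos rfl]
        exact fun e => ha01 (h.injective e)
      · intro k hk'
        rw [diagLHom_apply']
        show h (ν₀ (σ⁻¹ k)) = (h * σ⁻¹) k
        have : σ⁻¹ k ≠ a1 := by
          intro e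
          apply hk'
          rw [← e]
          simp
        rw [show ν₀ (σ⁻¹ k) = σ⁻¹ k from if_neg this]
        simp

end Main2
section Main3

lemma repCode_hmin (q p : ℕ) (hp : 0 < p) (T : Subgroup (Equiv.Perm (Fin q))) :
    ∀ β ∈ repCodeP p (permCode (T : Set (Equiv.Perm (Fin q)))),
      ∀ β' ∈ repCodeP p (permCode (T : Set (Equiv.Perm (Fin q)))),
        β ≠ β' → 2 ≤ hammingDist β β' := by
  rintro β ⟨x, ⟨t, ht, rfl⟩, rfl⟩ β' ⟨x', ⟨t', ht', rfl⟩, rfl⟩ hne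
  have htt' : t ≠ t' := by
    rintro rfl
    exact hne rfl
  have h2 := permCode_minsep htt'
  rw [hammingDist_repv]
  calc 2 = 1 * 2 := by omega
    _ ≤ p * hammingDist (alphaVtx t) (alphaVtx t') := Nat.mul_le_mul hp h2

lemma freq_part (q p : ℕ) (T : Subgroup (Equiv.Perm (Fin q))) :
    ∀ β ∈ repCodeP p (permCode (T : Set (Equiv.Perm (Fin q)))), ∀ a : Fin q,
      cnt β a = p := by
  rintro β ⟨x, ⟨t, _, rfl⟩, rfl⟩ a
  show (Finset.univ.filter fun ji : Fin p × Fin q => repv p (alphaVtx t) ji = a).card = p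
  have hf : (Finset.univ.filter fun ji : Fin p × Fin q => repv p (alphaVtx t) ji = a)
      = Finset.univ ×ˢ ({t⁻¹ a} : Finset (Fin q)) := by
    ext ⟨j, i⟩
    simp only [Finset.mem_filter, Finset.mem_univ, true_and, Finset.mem_product,
      Finset.mem_singleton]
    show t i = a ↔ _
    constructor
    · rintro rfl; simp
    · rintro rfl; simp
  rw [hf, Finset.card_product]
  simp

lemma rep_direction (q p : ℕ) (hq : 2 ≤ q) (hp : 0 < p) (T : Subgroup (Equiv.Perm (Fin q)))
    (h2t : ∀ i₁ i₂ j₁ j₂ : Fin q, i₁ ≠ i₂ → j₁ ≠ j₂ →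
      ∃ y ∈ Subgroup.normalizer (T : Set (Equiv.Perm (Fin q))), y i₁ = j₁ ∧ y i₂ = j₂) :
    ∃ Y : Subgroup (Equiv.Perm (Fin p × Fin q → Fin q)),
      DiagNbrTransitive Y (repCodeP p (permCode (T : Set (Equiv.Perm (Fin q))))) := by
  set D := repCodeP p (permCode (T : Set (Equiv.Perm (Fin q)))) with hDdef
  have hmin := repCode_hmin q p hp T
  set Y : Subgroup (Equiv.Perm (Fin p × Fin q → Fin q)) :=
    Subgroup.map (psiHom p q) ((Kgrp q T).prod ⊤) with hYdef
  have hle : Y ≤ diagL (Fin p × Fin q) q := by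
    rintro x ⟨k, _, rfl⟩
    exact ⟨(k.1.1, Equiv.prodCongr k.2 k.1.2), rfl⟩
  set a0 : Fin q := ⟨0, by omega⟩ with ha0
  set a1 : Fin q := ⟨1, by omega⟩ with ha1
  have ha01 : a0 ≠ a1 := by simp [ha0, ha1, Fin.ext_iff]
  set j₀ : Fin p := ⟨0, hp⟩ with hj₀
  set μ₀ : Fin p × Fin q → Fin q :=
    fun ji => if ji.1 = j₀ ∧ ji.2 = a1 then a0 else ji.2 with hμ₀
  refine ⟨Y, ⟨⟨fun x hx => diagL_le_autH (hle hx), ⟨repv p (alphaVtx 1), ?_⟩, ⟨μ₀, ?_⟩⟩, hle⟩⟩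
  · -- D is the orbit of repv p (alphaVtx 1)
    ext w
    simp only [Set.mem_setOf_eq]
    constructor
    · rintro ⟨x, ⟨t, ht, rfl⟩, rfl⟩
      refine ⟨psiHom p q ((1, t⁻¹), 1),
        ⟨((1, t⁻¹), 1), Subgroup.mem_prod.mpr ⟨⟨Subgroup.one_mem _, by simpa using ht⟩,
          Subgroup.mem_top _⟩, rfl⟩, ?_⟩
      rw [psiHom_repv]
      exact congrArg (repv p) (congrArg alphaVtx (by simp))
    · rintro ⟨x, ⟨⟨⟨h, σ⟩, τ⟩, hk, rfl⟩, rfl⟩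
      rw [psiHom_repv]
      have hkk := Subgroup.mem_prod.mp hk
      refine ⟨alphaVtx (h * 1 * σ⁻¹), ⟨h * 1 * σ⁻¹, by simpa using hkk.1.2, rfl⟩, rfl⟩
  · -- cell D 1 is the orbit of μ₀
    ext γ
    rw [mem_cell_one hmin]
    simp only [Set.mem_setOf_eq]
    constructor
    · rintro ⟨β, ⟨x, ⟨t, ht, rfl⟩, rfl⟩, hdist⟩
      obtain ⟨⟨j, i⟩, hne, hoff⟩ := single_of_dist_one hdist
      have hne' : γ (j, i) ≠ t i := hne
      have hii' : t⁻¹ (γ (j, i)) ≠ i := by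
        intro e
        exact hne' (by simpa using congrArg t e)
      obtain ⟨y, hy, hy0, hy1⟩ := h2t a0 a1 (t⁻¹ (γ (j, i))) i ha01 hii'
      refine ⟨psiHom p q ((t * y, y), Equiv.swap j₀ j),
        ⟨((t * y, y), Equiv.swap j₀ j), Subgroup.mem_prod.mpr
          ⟨⟨mul_mem (T.le_normalizer ht) hy, by simpa [mul_assoc] using ht⟩,
            Subgroup.mem_top _⟩, rfl⟩, ?_⟩
      funext ⟨j', i''⟩
      rw [psiHom_apply]
      show (t * y) (μ₀ ((Equiv.swap j₀ j)⁻¹ j', y⁻¹ i'')) = γ (j', i'')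
      by_cases hcase : j' = j ∧ i'' = i
      · obtain ⟨rfl, rfl⟩ := hcase
        have e1 : (Equiv.swap j₀ j')⁻¹ j' = j₀ := by simp
        have e2 : y⁻¹ i'' = a1 := by rw [← hy1]; simp
        rw [e1, e2]
        rw [show μ₀ (j₀, a1) = a0 from if_pos ⟨rfl, rfl⟩]
        simp only [Equiv.Perm.mul_apply]
        rw [hy0]
        simp
      · have hμval : μ₀ ((Equiv.swap j₀ j)⁻¹ j', y⁻¹ i'') = y⁻¹ i'' := by
          apply if_neg
          rintro ⟨e1, e2⟩
          apply hcase
          constructor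
          · have := congrArg (Equiv.swap j₀ j) e1
            simpa using this
          · rw [← hy1, ← e2]; simp
        rw [hμval]
        simp only [Equiv.Perm.mul_apply, Equiv.Perm.inv_def, Equiv.apply_symm_apply]
        have : (j', i'') ≠ (j, i) := by
          intro e
          exact hcase ⟨congrArg Prod.fst e, congrArg Prod.snd e⟩
        exact (hoff _ this).symm
    · rintro ⟨x, ⟨⟨⟨h, σ⟩, τ⟩, hk, rfl⟩, rfl⟩
      refine ⟨repv p (alphaVtx (h * σ⁻¹)),
        ⟨alphaVtx (h * σ⁻¹), ⟨h * σ⁻¹, (Subgroup.mem_prod.mp hk).1.2, rfl⟩, rfl⟩,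
        dist_one_of_single (τ j₀, σ a1) ?_ ?_⟩
      · rw [psiHom_apply]
        show h (μ₀ (τ⁻¹ (τ j₀), σ⁻¹ (σ a1))) ≠ repv p (alphaVtx (h * σ⁻¹)) (τ j₀, σ a1)
        have e1 : τ⁻¹ (τ j₀) = j₀ := by simp
        have e2 : σ⁻¹ (σ a1) = a1 := by simp
        rw [e1, e2]
        show h (μ₀ (j₀, a1)) ≠ (h * σ⁻¹) (σ a1)
        rw [show μ₀ (j₀, a1) = a0 from if_pos ⟨rfl, rfl⟩]
        simp only [Equiv.Perm.mul_apply, Equiv.Perm.inv_def, Equiv.symm_apply_apply]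
        exact fun e => ha01 (h.injective e)
      · rintro ⟨j, i⟩ hk'
        rw [psiHom_apply]
        show h (μ₀ (τ⁻¹ j, σ⁻¹ i)) = repv p (alphaVtx (h * σ⁻¹)) (j, i)
        have hμval : μ₀ (τ⁻¹ j, σ⁻¹ i) = σ⁻¹ i := by
          apply if_neg
          rintro ⟨e1, e2⟩
          apply hk'
          have h1 : j = τ j₀ := by rw [← e1]; simp
          have h2 : i = σ a1 := by rw [← e2]; simp
          rw [h1, h2]
        rw [hμval]
        rfl

end Main3
/-- Theorem 1.3: for a subgroup `T ≤ S_q`, the permutation code `C(T)`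
is diagonally neighbour transitive in `H(q,q)` iff `N_{S_q}(T)` is `2`-transitive;
moreover, if `C(T)` is diagonally neighbour transitive then for every positive `p` the
repetition code `Rep_p(C(T))` is a diagonally neighbour transitive frequency permutation
array in `H(pq,q)`. -/
theorem permCode_diag_neighbour_transitive_iff (q p : ℕ) (hq : 2 ≤ q) (hp : 0 < p)
    (T : Subgroup (Equiv.Perm (Fin q))) :
    ((∃ X : Subgroup (Equiv.Perm (Fin q → Fin q)),
        DiagNbrTransitive X (permCode (T : Set (Equiv.Perm (Fin q))))) ↔
      (∀ i₁ i₂ j₁ j₂ : Fin q, i₁ ≠ i₂ → j₁ ≠ j₂ →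
        ∃ y ∈ Subgroup.normalizer (T : Set (Equiv.Perm (Fin q))), y i₁ = j₁ ∧ y i₂ = j₂)) ∧
    ((∃ X : Subgroup (Equiv.Perm (Fin q → Fin q)),
        DiagNbrTransitive X (permCode (T : Set (Equiv.Perm (Fin q))))) →
      (∃ Y : Subgroup (Equiv.Perm (Fin p × Fin q → Fin q)),
        DiagNbrTransitive Y (repCodeP p (permCode (T : Set (Equiv.Perm (Fin q)))))) ∧
      (∀ β ∈ repCodeP p (permCode (T : Set (Equiv.Perm (Fin q)))), ∀ a : Fin q,
        cnt β a = p)) := by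
  refine ⟨⟨fwd_direction q hq T, bwd_direction q hq T⟩, fun hX => ?_⟩
  exact ⟨rep_direction q p hq hp T (fwd_direction q hq T hX), freq_part q p T⟩
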